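/- Let λ, R > 0, n ≥ 2, and 0 ≤ t ≤ R²/(2(n-1)). If a_t > 0 satisfies tan(λ(√(a_t² + 2(n-1)t) - R)) · a_t = √(a_t² + 2(n-1)t), then a_t² ≥ (π/(4λ) + R)² - 2(n-1)t ≥ πR/(2λ). -/

import Mathlib

/-- If `a_t > 0` solves `tan(λ(√(a_t² + 2(n-1)t) - R)) · a_t = √(a_t² + 2(n-1)t)`
(with `√(a_t² + 2(n-1)t) ∈ (R, R + π/(2λ))` and `0 ≤ t ≤ R²/(2(n-1))`), then
`a_t² ≥ (π/(4λ) + R)² - 2(n-1)t ≥ πR/(2λ)`. -/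
theorem a_t_lower_bound (n : ℕ) (hn : 2 ≤ n) (lam R t a : ℝ) (hlam : 0 < lam) (hR : 0 < R)
    (ht : 0 ≤ t) (htT : t ≤ R ^ 2 / (2 * ((n : ℝ) - 1))) (ha : 0 < a)
    (hrange : Real.sqrt (a ^ 2 + 2 * ((n : ℝ) - 1) * t) ∈
      Set.Ioo R (R + Real.pi / (2 * lam)))
    (heq : Real.tan (lam * (Real.sqrt (a ^ 2 + 2 * ((n : ℝ) - 1) * t) - R)) * a =
      Real.sqrt (a ^ 2 + 2 * ((n : ℝ) - 1) * t)) :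
    Real.pi * R / (2 * lam) ≤ (Real.pi / (4 * lam) + R) ^ 2 - 2 * ((n : ℝ) - 1) * t ∧
    (Real.pi / (4 * lam) + R) ^ 2 - 2 * ((n : ℝ) - 1) * t ≤ a ^ 2 := by
  have hn1 : (1 : ℝ) ≤ (n : ℝ) - 1 := by
    have : (2 : ℝ) ≤ n := by exact_mod_cast hn
    linarith
  have h2t : 2 * ((n : ℝ) - 1) * t ≤ R ^ 2 := by
    rw [le_div_iff₀ (by linarith)] at htT
    linarith
  have h2t0 : 0 ≤ 2 * ((n : ℝ) - 1) * t := by positivity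
  set s := Real.sqrt (a ^ 2 + 2 * ((n : ℝ) - 1) * t) with hs
  obtain ⟨hsR, hsU⟩ := hrange
  have hpi := Real.pi_pos
  have hs2 : s ^ 2 = a ^ 2 + 2 * ((n : ℝ) - 1) * t := by
    rw [hs, Real.sq_sqrt (by positivity)]
  have hsa : a ≤ s := by
    nlinarith [hR.trans hsR]
  have hspos : 0 < s := hR.trans hsR
  -- tan θ = s / a ≥ 1
  have htan : Real.tan (lam * (s - R)) = s / a := by
    field_simp [ha.ne'] at heq ⊢
    linarith [heq]
  have htan1 : 1 ≤ Real.tan (lam * (s - R)) := by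
    rw [htan, le_div_iff₀ ha]; linarith
  -- θ ∈ (0, π/2)
  have hθpos : 0 < lam * (s - R) := by
    have : 0 < s - R := by linarith
    positivity
  have hθlt : lam * (s - R) < Real.pi / 2 := by
    have h1 : s - R < Real.pi / (2 * lam) := by linarith
    calc lam * (s - R) < lam * (Real.pi / (2 * lam)) := by
          exact mul_lt_mul_of_pos_left h1 hlam
      _ = Real.pi / 2 := by field_simp
  -- θ ≥ π/4
  have hθge : Real.pi / 4 ≤ lam * (s - R) := by
    by_contra h
    push_neg at h
    have := Real.tan_lt_tan_of_lt_of_lt_pi_div_two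
      (x := lam * (s - R)) (y := Real.pi / 4) (by linarith) (by linarith) h
    rw [Real.tan_pi_div_four] at this
    linarith
  have hsge : R + Real.pi / (4 * lam) ≤ s := by
    have h4 : Real.pi / (4 * lam) ≤ s - R := by
      rw [div_le_iff₀ (by positivity)]
      nlinarith
    linarith
  constructor
  · have hexp : (Real.pi / (4 * lam) + R) ^ 2 =
        (Real.pi / (4 * lam)) ^ 2 + Real.pi * R / (2 * lam) + R ^ 2 := by
      field_simp; ring
    rw [hexp]
    have : 0 ≤ (Real.pi / (4 * lam)) ^ 2 := by positivity
    linarith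
  · have : (Real.pi / (4 * lam) + R) ^ 2 ≤ s ^ 2 := by
      have h0 : 0 ≤ Real.pi / (4 * lam) + R := by positivity
      nlinarith
    linarith [hs2 ▸ this]
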